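/- Let N be a network, I an influence specification for N, and fix a kinetic order v with I(v) = I. Then N is injective over K_g(N,I) if and only if both of the following hold: (i) N is injective over K_g(N)[v]; and (ii) for all sets C ⊆ {1,…,m} and J ⊆ {1,…,n} of cardinality s such that det(A_{J,C}) ≠ 0, the sign of det(Z(w)_{C,J}) is the same for all kinetic orders w ∈ Σ(I). -/

import Mathlib

noncomputable section

namespace CRN

variable {n m : ℕ}

/-- The orthogonal complement of a subspace of `Fin n → ℝ` with respect to the
standard scalar product. -/
def orthComp (F : Submodule ℝ (Fin n → ℝ)) : Submodule ℝ (Fin n → ℝ) where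
  carrier := {w | ∀ v ∈ F, ∑ i, w i * v i = 0}
  add_mem' := by
    intro a b ha hb v hv
    have h1 := ha v hv
    have h2 := hb v hv
    have key : ∀ i, (a + b) i * v i = a i * v i + b i * v i := fun i => by
      simp [add_mul]
    calc ∑ i, (a + b) i * v i
        = ∑ i, (a i * v i + b i * v i) := Finset.sum_congr rfl (fun i _ => key i)
      _ = (∑ i, a i * v i) + ∑ i, b i * v i := Finset.sum_add_distrib
      _ = 0 := by rw [h1, h2, add_zero]
  zero_mem' := by
    intro v hv
    simp
  smul_mem' := by
    intro t a ha v hv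
    have h1 := ha v hv
    simp only [Set.mem_setOf_eq, Pi.smul_apply, smul_eq_mul]
    calc ∑ i, t * a i * v i
        = t * ∑ i, a i * v i := by
          rw [Finset.mul_sum]
          exact Finset.sum_congr rfl fun i _ => (mul_assoc _ _ _)
      _ = 0 := by rw [h1, mul_zero]

/-- `ω` is a reduced basis of `F^⊥`: it is a basis of the orthogonal complement of `F`,
`ω i` has `i`-th coordinate `1`, and `j`-th coordinate `0` for every `j < d`, `j ≠ i`. -/
def IsReducedBasis (d : ℕ) (F : Submodule ℝ (Fin n → ℝ)) (ω : Fin d → Fin n → ℝ) : Prop :=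
  (∀ i, ω i ∈ orthComp F) ∧
  Submodule.span ℝ (Set.range ω) = orthComp F ∧
  LinearIndependent ℝ ω ∧
  (∀ (i : Fin d) (j : Fin n), (j : ℕ) = (i : ℕ) → ω i j = 1) ∧
  (∀ (i : Fin d) (j : Fin n), (j : ℕ) < d → (j : ℕ) ≠ (i : ℕ) → ω i j = 0)

/-- The matrix whose top `d` rows are `ω` and whose remaining rows agree with `M`. -/
def tildeMat (d : ℕ) (ω : Fin d → Fin n → ℝ) (M : Matrix (Fin n) (Fin n) ℝ) :
    Matrix (Fin n) (Fin n) ℝ :=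
  Matrix.of fun i j => if h : (i : ℕ) < d then ω ⟨(i : ℕ), h⟩ j else M i j

/-- The stoichiometric matrix: `r`-th column is `y' r - y r`. -/
def stoich (y y' : Fin m → Fin n → ℝ) : Matrix (Fin n) (Fin m) ℝ :=
  Matrix.of fun i r => y' r i - y r i

/-- The stoichiometric subspace: the span of the reaction vectors `y' r - y r`. -/
def stoichSpan (y y' : Fin m → Fin n → ℝ) : Submodule ℝ (Fin n → ℝ) :=
  Submodule.span ℝ (Set.range fun r => (fun i => y' r i - y r i))

/-- The matrix whose `r`-th row is the kinetic-order vector `v r`. -/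
def Zmat (v : Fin m → Fin n → ℝ) : Matrix (Fin m) (Fin n) ℝ :=
  Matrix.of fun r i => v r i

/-- The Jacobian matrix of `f` at `c`. -/
def jac (f : (Fin n → ℝ) → Fin n → ℝ) (c : Fin n → ℝ) : Matrix (Fin n) (Fin n) ℝ :=
  Matrix.of fun i j => fderiv ℝ (fun x => f x i) c (Pi.single j 1)

/-- The species formation rate function of a kinetics `K`. -/
def specForm (y y' : Fin m → Fin n → ℝ) (K : Fin m → (Fin n → ℝ) → ℝ) (c : Fin n → ℝ) :
    Fin n → ℝ :=
  fun i => ∑ r, K r c * (y' r i - y r i)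

/-- The power-law rate functions with rate vector `κ` and kinetic order `v`. -/
def powerLaw (κ : Fin m → ℝ) (v : Fin m → Fin n → ℝ) : Fin m → (Fin n → ℝ) → ℝ :=
  fun r c => κ r * ∏ j, c j ^ v r j

/-- The power-law species formation rate function. -/
def plf (y y' : Fin m → Fin n → ℝ) (κ : Fin m → ℝ) (v : Fin m → Fin n → ℝ) (c : Fin n → ℝ) :
    Fin n → ℝ :=
  fun i => ∑ r, κ r * (∏ j, c j ^ v r j) * (y' r i - y r i)

/-- The extended rate function associated with a reduced basis `ω` and `f`. -/
def tildeF (d : ℕ) (ω : Fin d → Fin n → ℝ) (f : (Fin n → ℝ) → Fin n → ℝ) (c : Fin n → ℝ) :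
    Fin n → ℝ :=
  fun i => if h : (i : ℕ) < d then ∑ j, ω ⟨(i : ℕ), h⟩ j * c j else f c i

/-- The extended rate function with the bottom `s` components negated. -/
def hatF (d : ℕ) (ω : Fin d → Fin n → ℝ) (f : (Fin n → ℝ) → Fin n → ℝ) (c : Fin n → ℝ) :
    Fin n → ℝ :=
  fun i => if h : (i : ℕ) < d then ∑ j, ω ⟨(i : ℕ), h⟩ j * c j else -(f c i)

/-- Membership in the positive orthant. -/
def Pos (c : Fin n → ℝ) : Prop := ∀ i, 0 < c i

/-- The network is injective over the power-law kinetics with fixed kinetic order `v`. -/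
def InjOverPL (y y' : Fin m → Fin n → ℝ) (v : Fin m → Fin n → ℝ) : Prop :=
  ∀ κ : Fin m → ℝ, (∀ r, 0 < κ r) → ∀ a b : Fin n → ℝ, Pos a → Pos b → a ≠ b →
    a - b ∈ stoichSpan y y' → plf y y' κ v a ≠ plf y y' κ v b

/-- An influence specification takes values in `{-1, 0, 1}`. -/
def IsInfluence (I : Fin m → Fin n → ℝ) : Prop := ∀ r i, I r i = -1 ∨ I r i = 0 ∨ I r i = 1

/-- The influence specification associated with a kinetic order `v`. -/
def infOf (v : Fin m → Fin n → ℝ) : Fin m → Fin n → ℝ := fun r i => Real.sign (v r i)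

/-- `v ∈ Σ(I)`: the kinetic order `v` has associated influence specification `I`. -/
def InSigma (I : Fin m → Fin n → ℝ) (v : Fin m → Fin n → ℝ) : Prop :=
  ∀ r i, Real.sign (v r i) = I r i

/-- The partial order `I' ≼ I` on influence specifications. -/
def Preceq (I' I : Fin m → Fin n → ℝ) : Prop :=
  ∀ r i, (I' r i = 1 → I r i = 1) ∧ (I' r i = -1 → I r i = -1)

/-- The matrix `M̃(v)`: top `d` rows `ω`, bottom rows from `A ⬝ Z(v)`. -/
def Mt (y y' : Fin m → Fin n → ℝ) (d : ℕ) (ω : Fin d → Fin n → ℝ)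
    (v : Fin m → Fin n → ℝ) : Matrix (Fin n) (Fin n) ℝ :=
  tildeMat d ω (stoich y y' * Zmat v)

/-- The influence specification `I` has a signed determinant. -/
def SignedDet (y y' : Fin m → Fin n → ℝ) (d : ℕ) (ω : Fin d → Fin n → ℝ)
    (I : Fin m → Fin n → ℝ) : Prop :=
  ∀ v w, InSigma I v → InSigma I w →
    Real.sign (Mt y y' d ω v).det = Real.sign (Mt y y' d ω w).det

/-- The influence specification `I` is sign-nonsingular (SNS). -/
def IsSNS (y y' : Fin m → Fin n → ℝ) (d : ℕ) (ω : Fin d → Fin n → ℝ)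
    (I : Fin m → Fin n → ℝ) : Prop :=
  SignedDet y y' d ω I ∧ ∀ v, InSigma I v → (Mt y y' d ω v).det ≠ 0

/-- `Ω` is an admissible kinetics domain: `ℝ^n_{>0} ⊆ Ω ⊆ ℝ^n_{≥0}`. -/
def KinDom (Ω : Set (Fin n → ℝ)) : Prop :=
  {c : Fin n → ℝ | ∀ i, 0 < c i} ⊆ Ω ∧ Ω ⊆ {c : Fin n → ℝ | ∀ i, 0 ≤ c i}

/-- The rate functions are nonnegative on the domain. -/
def KinNonneg (Ω : Set (Fin n → ℝ)) (K : Fin m → (Fin n → ℝ) → ℝ) : Prop :=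
  ∀ r, ∀ c ∈ Ω, 0 ≤ K r c

/-- `I_r^+ ⊆ supp c`. -/
def PosSupp (I : Fin m → Fin n → ℝ) (r : Fin m) (c : Fin n → ℝ) : Prop :=
  ∀ i, I r i = 1 → c i ≠ 0

/-- The kinetics `K` respects the influence specification `I`. -/
def Respects (Ω : Set (Fin n → ℝ)) (K : Fin m → (Fin n → ℝ) → ℝ)
    (I : Fin m → Fin n → ℝ) : Prop :=
  ∀ c ∈ Ω, ∀ r, (0 < K r c ↔ PosSupp I r c)

/-- The kinetics `K` is strictly monotonic with respect to `I`. -/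
def StrictlyMonotonic (Ω : Set (Fin n → ℝ)) (K : Fin m → (Fin n → ℝ) → ℝ)
    (I : Fin m → Fin n → ℝ) : Prop :=
  Respects Ω K I ∧
  ∀ (r : Fin m) (c d : Fin n → ℝ), c ∈ Ω → d ∈ Ω → PosSupp I r c → PosSupp I r d →
    ∀ i, (∀ j, j ≠ i → c j = d j) →
      ((I r i = 1 → c i < d i → K r c < K r d) ∧
       (I r i = -1 → c i < d i → K r d < K r c) ∧
       (I r i = 0 → K r c = K r d))

/-- The kinetics `K` is differentiable with respect to `I`. -/
def DiffWrt (Ω : Set (Fin n → ℝ)) (K : Fin m → (Fin n → ℝ) → ℝ)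
    (I : Fin m → Fin n → ℝ) : Prop :=
  Respects Ω K I ∧
  (∀ r, ∀ c ∈ Ω, ContinuousWithinAt (K r) Ω c) ∧
  (∀ (r : Fin m) (c : Fin n → ℝ), (∀ i, 0 < c i) → DifferentiableAt ℝ (K r) c) ∧
  (∀ (r : Fin m) (c : Fin n → ℝ), (∀ i, 0 < c i) → ∀ i,
     Real.sign (fderiv ℝ (K r) c (Pi.single i 1)) = I r i)

/-- `a` and `b` are non-overlapping with respect to `I`. -/
def NonOverlap (I : Fin m → Fin n → ℝ) (a b : Fin n → ℝ) : Prop :=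
  ∀ r, ¬ PosSupp I r a → PosSupp I r b

/-- The kinetics `K` is weakly monotonic with respect to `I`. -/
def WeaklyMonotonic (y : Fin m → Fin n → ℝ) (Ω : Set (Fin n → ℝ))
    (K : Fin m → (Fin n → ℝ) → ℝ) (I : Fin m → Fin n → ℝ) : Prop :=
  ∀ a ∈ Ω, ∀ b ∈ Ω, NonOverlap I a b → ∀ r,
    (K r b < K r a → ∃ i, Real.sign (a i - b i) = I r i ∧ I r i ≠ 0) ∧
    (K r a = K r b →
      ((∀ i, y r i ≠ 0 → a i = b i) ∨
        ∃ i j, i ≠ j ∧ Real.sign (a i - b i) = I r i ∧ I r i ≠ 0 ∧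
          Real.sign (a j - b j) = -(I r j) ∧ I r j ≠ 0))

/-- A square real matrix is a P-matrix: all principal minors are positive. -/
def IsPMatrix {N : ℕ} (M : Matrix (Fin N) (Fin N) ℝ) : Prop :=
  ∀ J : Finset (Fin N),
    0 < (M.submatrix (fun i : {x // x ∈ J} => (i : Fin N))
          (fun j : {x // x ∈ J} => (j : Fin N))).det

/-- The minor `det(A_{J,C})` of the stoichiometric matrix. -/
def subDetA (y y' : Fin m → Fin n → ℝ) (s : ℕ) (J : Finset (Fin n)) (C : Finset (Fin m))
    (hJ : J.card = s) (hC : C.card = s) : ℝ :=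
  ((stoich y y').submatrix (fun a => (J.orderIsoOfFin hJ a).1)
    (fun b => (C.orderIsoOfFin hC b).1)).det

/-- The minor `det(Z(v)_{C,J})`. -/
def subDetZ (v : Fin m → Fin n → ℝ) (s : ℕ) (C : Finset (Fin m)) (J : Finset (Fin n))
    (hC : C.card = s) (hJ : J.card = s) : ℝ :=
  ((Zmat v).submatrix (fun a => (C.orderIsoOfFin hC a).1)
    (fun b => (J.orderIsoOfFin hJ b).1)).det

/-- The Hill-type species formation rate function. -/
def hillf (y y' : Fin m → Fin n → ℝ) (κ : Fin m → ℝ) (δ v : Fin m → Fin n → ℝ)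
    (c : Fin n → ℝ) : Fin n → ℝ :=
  fun i => ∑ r, κ r * (∏ j, (c j ^ v r j) / (δ r j + c j ^ v r j)) * (y' r i - y r i)


set_option linter.unusedSectionVars false
set_option linter.unusedVariables false
set_option maxHeartbeats 1600000



open Matrix Finset

section CB



variable {α : Type*} [Fintype α] [LinearOrder α] {s : ℕ}

/-- The increasing enumeration of an `s`-element subset. -/
def semb (C : Finset α) (hC : C.card = s) : Fin s → α := fun a => (C.orderIsoOfFin hC a : α)

lemma semb_injective (C : Finset α) (hC : C.card = s) : Function.Injective (semb C hC) :=
  fun a b h => (C.orderIsoOfFin hC).injective (Subtype.ext h)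

lemma semb_mem (C : Finset α) (hC : C.card = s) (a : Fin s) : semb C hC a ∈ C :=
  (C.orderIsoOfFin hC a).2

lemma image_semb (C : Finset α) (hC : C.card = s) :
    Finset.image (semb C hC) Finset.univ = C := by
  apply Finset.eq_of_subset_of_card_le
  · intro x hx
    simp only [Finset.mem_image] at hx
    obtain ⟨a, -, rfl⟩ := hx
    exact semb_mem C hC a
  · rw [Finset.card_image_of_injective _ (semb_injective C hC), Finset.card_univ,
      Fintype.card_fin, hC]

lemma orderIsoOfFin_symm_val {S C : Finset α} (h : S = C) {hS : S.card = s} {hC : C.card = s}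
    {x : α} {hx : x ∈ S} (i : Fin s) (hxi : x = (C.orderIsoOfFin hC i : α)) :
    (S.orderIsoOfFin hS).symm ⟨x, hx⟩ = i := by
  subst h; subst hxi
  exact OrderIso.symm_apply_apply _ i

/-- The equivalence between injective tuples and (subset, permutation) pairs. -/
def injEquiv : {p : Fin s → α // Function.Injective p} ≃
    {C : Finset α // C.card = s} × Equiv.Perm (Fin s) where
  toFun p :=
    ⟨⟨Finset.image p.1 Finset.univ, by
        rw [Finset.card_image_of_injective _ p.2, Finset.card_univ, Fintype.card_fin]⟩,
      Equiv.ofBijective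
        (fun i => ((Finset.image p.1 Finset.univ).orderIsoOfFin (by
            rw [Finset.card_image_of_injective _ p.2, Finset.card_univ, Fintype.card_fin])).symm
          ⟨p.1 i, Finset.mem_image_of_mem _ (Finset.mem_univ i)⟩)
        (Finite.injective_iff_bijective.mp (fun a b h => by
          apply p.2
          have := congrArg (fun x => ((((Finset.image p.1 Finset.univ).orderIsoOfFin (by
            rw [Finset.card_image_of_injective _ p.2, Finset.card_univ, Fintype.card_fin]))) x : α)) h
          simpa using this))⟩
  invFun Cτ := ⟨semb Cτ.1.1 Cτ.1.2 ∘ Cτ.2, (semb_injective _ _).comp Cτ.2.injective⟩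
  left_inv p := by
    apply Subtype.ext
    funext i
    simp only [Function.comp_apply, semb, Equiv.ofBijective_apply, OrderIso.apply_symm_apply]
  right_inv := by
    rintro ⟨⟨C, hC⟩, τ⟩
    have himg : Finset.image (semb C hC ∘ τ) Finset.univ = C := by
      rw [← Finset.image_image, Finset.image_univ_equiv, image_semb]
    refine Prod.ext (Subtype.ext himg) ?_
    apply Equiv.ext
    intro i
    simp only [Equiv.ofBijective_apply, Function.comp_apply]
    exact orderIsoOfFin_symm_val himg (τ i) rfl

lemma injEquiv_symm_apply (Cτ : {C : Finset α // C.card = s} × Equiv.Perm (Fin s)) :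
    ((injEquiv.symm Cτ : {p : Fin s → α // Function.Injective p}) : Fin s → α)
      = semb Cτ.1.1 Cτ.1.2 ∘ Cτ.2 := rfl

/-- **Cauchy–Binet**. -/
theorem cauchy_binet (P : Matrix (Fin s) α ℝ) (Q : Matrix α (Fin s) ℝ) :
    (P * Q).det = ∑ C : {C : Finset α // C.card = s},
      (P.submatrix id (semb C.1 C.2)).det * (Q.submatrix (semb C.1 C.2) id).det := by
  have step1 : (P * Q).det
      = ∑ p : Fin s → α, (∏ i, Q (p i) i) * (P.submatrix id p).det := by
    calc (P * Q).det = ∑ σ : Equiv.Perm (Fin s), (Equiv.Perm.sign σ : ℤ) *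
          ∏ i, ∑ j : α, P (σ i) j * Q j i := by
          simp only [Matrix.det_apply', Matrix.mul_apply]
      _ = ∑ σ : Equiv.Perm (Fin s), ∑ p : Fin s → α, (Equiv.Perm.sign σ : ℤ) *
          ∏ i, P (σ i) (p i) * Q (p i) i := by
          refine Finset.sum_congr rfl fun σ _ => ?_
          rw [Finset.prod_univ_sum, Finset.mul_sum]
          simp [Fintype.piFinset_univ]
      _ = ∑ p : Fin s → α, ∑ σ : Equiv.Perm (Fin s), (Equiv.Perm.sign σ : ℤ) *
          ∏ i, P (σ i) (p i) * Q (p i) i := Finset.sum_comm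
      _ = ∑ p : Fin s → α, (∏ i, Q (p i) i) * (P.submatrix id p).det := by
          refine Finset.sum_congr rfl fun p _ => ?_
          rw [Matrix.det_apply', Finset.mul_sum]
          refine Finset.sum_congr rfl fun σ _ => ?_
          rw [Finset.prod_mul_distrib]
          simp only [Matrix.submatrix_apply, id_eq]
          ring
  rw [step1]
  have step2 : ∑ p : Fin s → α, (∏ i, Q (p i) i) * (P.submatrix id p).det
      = ∑ p : {p : Fin s → α // Function.Injective p},
          (∏ i, Q (p.1 i) i) * (P.submatrix id p.1).det := by
    rw [← Finset.sum_subtype (Finset.univ.filter (fun p : Fin s → α => Function.Injective p))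
      (fun p => by simp) (fun p => (∏ i, Q (p i) i) * (P.submatrix id p).det)]
    symm
    apply Finset.sum_subset (Finset.filter_subset _ _)
    intro p _ hp
    simp only [Finset.mem_filter, Finset.mem_univ, true_and] at hp
    rw [Function.not_injective_iff] at hp
    obtain ⟨a, b, hab, hne⟩ := hp
    rw [Matrix.det_zero_of_column_eq hne (fun k => by simp [hab]), mul_zero]
  rw [step2]
  rw [← Equiv.sum_comp injEquiv.symm
    (fun p => (∏ i, Q (p.1 i) i) * (P.submatrix id p.1).det)]
  rw [Fintype.sum_prod_type]
  refine Finset.sum_congr rfl fun C _ => ?_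
  have key : ∀ τ : Equiv.Perm (Fin s),
      (∏ i, Q ((semb C.1 C.2 ∘ τ) i) i) * (P.submatrix id (semb C.1 C.2 ∘ τ)).det
      = ((Equiv.Perm.sign τ : ℤ) * ∏ i, Q (semb C.1 C.2 (τ i)) i) * (P.submatrix id (semb C.1 C.2)).det := by
    intro τ
    have : P.submatrix id (semb C.1 C.2 ∘ τ) = (P.submatrix id (semb C.1 C.2)).submatrix id τ := by
      rw [Matrix.submatrix_submatrix]; rfl
    rw [this, Matrix.det_permute']
    simp only [Function.comp_apply]
    ring
  calc ∑ τ : Equiv.Perm (Fin s),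
        (∏ i, Q ((injEquiv.symm (C, τ)).1 i) i) * (P.submatrix id ((injEquiv.symm (C, τ) : {p : Fin s → α // Function.Injective p}).1)).det
      = ∑ τ : Equiv.Perm (Fin s), ((Equiv.Perm.sign τ : ℤ) * ∏ i, Q (semb C.1 C.2 (τ i)) i) * (P.submatrix id (semb C.1 C.2)).det := by
        refine Finset.sum_congr rfl fun τ _ => ?_
        rw [show ((injEquiv.symm (C, τ) : {p : Fin s → α // Function.Injective p}) : Fin s → α) = semb C.1 C.2 ∘ τ from rfl]
        exact key τ
    _ = (P.submatrix id (semb C.1 C.2)).det * (Q.submatrix (semb C.1 C.2) id).det := by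
        rw [← Finset.sum_mul, mul_comm]
        congr 1
        rw [Matrix.det_apply']
        refine Finset.sum_congr rfl fun τ _ => ?_
        simp only [Matrix.submatrix_apply, id_eq]


end CB

lemma dot_mulVec_eq {n s : ℕ} (B : Matrix (Fin n) (Fin s) ℝ) (u : Fin n → ℝ) (c : Fin s → ℝ) :
    u ⬝ᵥ (B *ᵥ c) = (Bᵀ *ᵥ u) ⬝ᵥ c := by
  rw [Matrix.dotProduct_mulVec, Matrix.mulVec_transpose]

/-- a sign-matched positive multiplier -/
lemma exists_pos_mul {x z : ℝ} (h0 : x = 0 → z = 0) (hpos : 0 < x → 0 < z)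
    (hneg : x < 0 → z < 0) : ∃ l : ℝ, 0 < l ∧ l * x = z := by
  rcases lt_trichotomy x 0 with hx | hx | hx
  · exact ⟨z / x, div_pos_of_neg_of_neg (hneg hx) hx, div_mul_cancel₀ _ hx.ne⟩
  · exact ⟨1, one_pos, by simp [hx, h0 hx]⟩
  · exact ⟨z / x, div_pos (hpos hx) hx, div_mul_cancel₀ _ hx.ne'⟩

lemma prod_rpow_eq_exp {n : ℕ} {c : Fin n → ℝ} (hc : ∀ j, 0 < c j) (v : Fin n → ℝ) :
    (∏ j, c j ^ v j) = Real.exp (∑ j, v j * Real.log (c j)) := by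
  rw [Real.exp_sum]
  exact Finset.prod_congr rfl fun j _ => by rw [Real.rpow_def_of_pos (hc j), mul_comm]

section Net

variable {n m s : ℕ} (y y' : Fin m → Fin n → ℝ)

lemma rvec_mem (r : Fin m) : (fun i => y' r i - y r i) ∈ stoichSpan y y' :=
  Submodule.subset_span ⟨r, rfl⟩

variable (b : Module.Basis (Fin s) ℝ (stoichSpan y y'))

def Bmat : Matrix (Fin n) (Fin s) ℝ := Matrix.of fun i k => (b k : Fin n → ℝ) i

def Nmat : Matrix (Fin s) (Fin m) ℝ :=
  Matrix.of fun k r => b.repr ⟨fun i => y' r i - y r i, rvec_mem y y' r⟩ k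

lemma coe_sum_smul (c : Fin s → ℝ) (i : Fin n) :
    ((↑(∑ k, c k • b k) : Fin n → ℝ)) i = ∑ k, c k * (b k : Fin n → ℝ) i := by
  simp [AddSubmonoidClass.coe_finset_sum]

lemma stoich_eq_mul : stoich y y' = Bmat y y' b * Nmat y y' b := by
  ext i r
  have h := congrArg (fun u : stoichSpan y y' => (u : Fin n → ℝ) i)
    (b.sum_repr ⟨fun i => y' r i - y r i, rvec_mem y y' r⟩)
  simp only at h
  rw [coe_sum_smul] at h
  simp only [stoich, Matrix.of_apply, Matrix.mul_apply, Bmat, Nmat]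
  rw [← h]
  exact Finset.sum_congr rfl fun k _ => mul_comm _ _

lemma Bmat_mulVec_eq_sum (c : Fin s → ℝ) :
    (Bmat y y' b) *ᵥ c = ↑(∑ k, c k • b k) := by
  funext i
  rw [coe_sum_smul]
  simp only [Matrix.mulVec, dotProduct, Bmat, Matrix.of_apply]
  exact Finset.sum_congr rfl fun k _ => mul_comm _ _

lemma Bmat_mulVec_mem (c : Fin s → ℝ) : (Bmat y y' b) *ᵥ c ∈ stoichSpan y y' := by
  rw [Bmat_mulVec_eq_sum]; exact (∑ k, c k • b k).2

lemma Bmat_mulVec_eq_zero {c : Fin s → ℝ} (h : (Bmat y y' b) *ᵥ c = 0) : c = 0 := by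
  rw [Bmat_mulVec_eq_sum] at h
  have h2 : (∑ k, c k • b k) = 0 := by
    apply Subtype.ext; simpa using h
  have h3 := linearIndependent_iff'.mp b.linearIndependent Finset.univ c h2
  funext k; exact h3 k (Finset.mem_univ k)

lemma mem_stoichSpan_exists {u : Fin n → ℝ} (hu : u ∈ stoichSpan y y') :
    ∃ c, u = (Bmat y y' b) *ᵥ c := by
  refine ⟨fun k => b.repr ⟨u, hu⟩ k, ?_⟩
  rw [Bmat_mulVec_eq_sum]
  have := b.sum_repr ⟨u, hu⟩
  rw [this]

lemma stoich_mulVec_mem (t : Fin m → ℝ) : (stoich y y') *ᵥ t ∈ stoichSpan y y' := by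
  have : (stoich y y') *ᵥ t = ∑ r, t r • (fun i => y' r i - y r i) := by
    funext i
    simp only [Matrix.mulVec, dotProduct, stoich, Matrix.of_apply, Finset.sum_apply,
      Pi.smul_apply, smul_eq_mul]
    exact Finset.sum_congr rfl fun r _ => mul_comm _ _
  rw [this]
  exact Submodule.sum_mem _ fun r _ => Submodule.smul_mem _ _ (rvec_mem y y' r)

lemma det_BtB_ne_zero : ((Bmat y y' b)ᵀ * Bmat y y' b).det ≠ 0 := by
  intro h
  obtain ⟨c, hc0, hc⟩ := (Matrix.exists_mulVec_eq_zero_iff).mpr h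
  apply hc0
  apply Bmat_mulVec_eq_zero y y' b
  have hz : (Bmat y y' b) *ᵥ c ⬝ᵥ ((Bmat y y' b) *ᵥ c) = 0 := by
    rw [dot_mulVec_eq, Matrix.mulVec_mulVec, hc, zero_dotProduct]
  exact (dotProduct_self_eq_zero).mp hz

/-- kernel criterion -/
lemma ker_iff (M : Matrix (Fin n) (Fin n) ℝ) (hM : ∀ t, M *ᵥ t ∈ stoichSpan y y') :
    (∃ u ∈ stoichSpan y y', u ≠ 0 ∧ M *ᵥ u = 0) ↔ ((Bmat y y' b)ᵀ * M * Bmat y y' b).det = 0 := by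
  constructor
  · rintro ⟨u, hu, hu0, huM⟩
    obtain ⟨c, rfl⟩ := mem_stoichSpan_exists y y' b hu
    rw [← Matrix.exists_mulVec_eq_zero_iff]
    refine ⟨c, fun h => hu0 (by rw [h, Matrix.mulVec_zero]), ?_⟩
    rw [← Matrix.mulVec_mulVec, ← Matrix.mulVec_mulVec, huM, Matrix.mulVec_zero]
  · intro h
    obtain ⟨c, hc0, hc⟩ := (Matrix.exists_mulVec_eq_zero_iff).mpr h
    rw [← Matrix.mulVec_mulVec, ← Matrix.mulVec_mulVec] at hc
    set z := M *ᵥ ((Bmat y y' b) *ᵥ c) with hzdef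
    have hzmem : z ∈ stoichSpan y y' := hM _
    have hz : z = 0 := by
      obtain ⟨d, hd⟩ := mem_stoichSpan_exists y y' b hzmem
      have h1 : z ⬝ᵥ z = 0 := by
        nth_rewrite 2 [hd]
        rw [dot_mulVec_eq]
        rw [hc, zero_dotProduct]
      exact (dotProduct_self_eq_zero).mp h1
    exact ⟨(Bmat y y' b) *ᵥ c, Bmat_mulVec_mem y y' b c,
      fun h0 => hc0 (Bmat_mulVec_eq_zero y y' b h0), hz⟩

end Net

section Crit
variable {n m s : ℕ} (y y' : Fin m → Fin n → ℝ) (b : Module.Basis (Fin s) ℝ (stoichSpan y y'))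

def Mlam (w : Fin m → Fin n → ℝ) (lam : Fin m → ℝ) (mu : Fin n → ℝ) :
    Matrix (Fin n) (Fin n) ℝ :=
  stoich y y' * Matrix.diagonal lam * Zmat w * Matrix.diagonal mu

lemma Mlam_mulVec (w : Fin m → Fin n → ℝ) (lam : Fin m → ℝ) (mu : Fin n → ℝ) (u : Fin n → ℝ) :
    Mlam y y' w lam mu *ᵥ u
      = (stoich y y') *ᵥ (fun r => lam r * ((Zmat w) *ᵥ (fun j => mu j * u j)) r) := by
  have h1 : Matrix.diagonal mu *ᵥ u = fun j => mu j * u j := by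
    funext j; rw [Matrix.mulVec_diagonal]
  have h2 : Matrix.diagonal lam *ᵥ ((Zmat w) *ᵥ (fun j => mu j * u j))
      = fun r => lam r * ((Zmat w) *ᵥ (fun j => mu j * u j)) r := by
    funext r; rw [Matrix.mulVec_diagonal]
  simp only [Mlam, ← Matrix.mulVec_mulVec, h1, h2]

lemma Mlam_mem (w : Fin m → Fin n → ℝ) (lam : Fin m → ℝ) (mu : Fin n → ℝ) (u : Fin n → ℝ) :
    Mlam y y' w lam mu *ᵥ u ∈ stoichSpan y y' := by
  rw [Mlam_mulVec]; exact stoich_mulVec_mem y y' _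

lemma plf_sub (κ : Fin m → ℝ) (w : Fin m → Fin n → ℝ) (a c : Fin n → ℝ) (i : Fin n) :
    plf y y' κ w a i - plf y y' κ w c i
      = ∑ r, (κ r * ((∏ j, a j ^ w r j) - (∏ j, c j ^ w r j))) * stoich y y' i r := by
  simp only [plf, stoich, Matrix.of_apply, ← Finset.sum_sub_distrib]
  exact Finset.sum_congr rfl fun r _ => by ring

lemma stoich_mulVec_apply (v : Fin m → ℝ) (i : Fin n) :
    ((stoich y y') *ᵥ v) i = ∑ r, v r * stoich y y' i r := by
  simp only [Matrix.mulVec, dotProduct]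
  exact Finset.sum_congr rfl fun r _ => mul_comm _ _

lemma Zmat_mulVec_apply (w : Fin m → Fin n → ℝ) (x : Fin n → ℝ) (r : Fin m) :
    ((Zmat w) *ᵥ x) r = ∑ j, w r j * x j := rfl

/-- From a kernel vector to a pair of positive states with equal rates. -/
lemma construct_ab (w : Fin m → Fin n → ℝ) {lam : Fin m → ℝ} {mu : Fin n → ℝ}
    (hl : ∀ r, 0 < lam r) (hm : ∀ j, 0 < mu j) {u : Fin n → ℝ}
    (humem : u ∈ stoichSpan y y') (hu0 : u ≠ 0) (hM : Mlam y y' w lam mu *ᵥ u = 0) :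
    ∃ κ, (∀ r, 0 < κ r) ∧ ∃ a c, Pos a ∧ Pos c ∧ a ≠ c ∧ a - c ∈ stoichSpan y y' ∧
      plf y y' κ w a = plf y y' κ w c := by
  classical
  set x : Fin n → ℝ := fun j => mu j * u j with hxdef
  set c0 : Fin n → ℝ := fun j => if u j = 0 then 1 else u j / (Real.exp (x j) - 1) with hc0def
  have hxsign : ∀ j, (0 < u j → 0 < x j) ∧ (u j < 0 → x j < 0) ∧ (u j = 0 → x j = 0) := by
    intro j
    refine ⟨fun h => mul_pos (hm j) h, fun h => mul_neg_of_pos_of_neg (hm j) h,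
      fun h => by simp [hxdef, h]⟩
  have hc0pos : ∀ j, 0 < c0 j := by
    intro j
    by_cases h : u j = 0
    · simp [hc0def, h]
    · simp only [hc0def, if_neg h]
      rcases lt_or_gt_of_ne h with hneg | hpos
      · apply div_pos_of_neg_of_neg hneg
        have : x j < 0 := (hxsign j).2.1 hneg
        have := Real.exp_lt_exp.mpr this
        rw [Real.exp_zero] at this
        linarith
      · apply div_pos hpos
        have : 0 < x j := (hxsign j).1 hpos
        have := Real.exp_lt_exp.mpr this
        rw [Real.exp_zero] at this
        linarith
  set a0 : Fin n → ℝ := fun j => c0 j * Real.exp (x j) with ha0def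
  have ha0pos : ∀ j, 0 < a0 j := fun j => mul_pos (hc0pos j) (Real.exp_pos _)
  have hsub : ∀ j, a0 j - c0 j = u j := by
    intro j
    have : a0 j - c0 j = c0 j * (Real.exp (x j) - 1) := by simp [ha0def]; ring
    rw [this]
    by_cases h : u j = 0
    · simp [hc0def, h, (hxsign j).2.2 h]
    · have hx0 : x j ≠ 0 := by
        rcases lt_or_gt_of_ne h with hneg | hpos
        · exact ((hxsign j).2.1 hneg).ne
        · exact ((hxsign j).1 hpos).ne'
      have hexp : Real.exp (x j) - 1 ≠ 0 := by
        intro hcon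
        apply hx0
        have : Real.exp (x j) = Real.exp 0 := by rw [Real.exp_zero]; linarith
        exact Real.exp_injective this
      simp only [hc0def, if_neg h]
      field_simp
  have hlog : ∀ j, Real.log (a0 j) - Real.log (c0 j) = x j := by
    intro j
    rw [ha0def]
    simp only
    rw [Real.log_mul (hc0pos j).ne' (Real.exp_pos _).ne', Real.log_exp]
    ring
  -- sums of logs
  set t : Fin m → ℝ := fun r => ((Zmat w) *ᵥ x) r with htdef
  have hts : ∀ r, (∑ j, w r j * Real.log (a0 j)) - (∑ j, w r j * Real.log (c0 j)) = t r := by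
    intro r
    have ht : t r = ∑ j, w r j * x j := rfl
    rw [ht, ← Finset.sum_sub_distrib]
    exact Finset.sum_congr rfl fun j _ => by rw [← hlog j]; ring
  set g : Fin m → ℝ := fun r => (∏ j, a0 j ^ w r j) - (∏ j, c0 j ^ w r j) with hgdef
  have hg : ∀ r, g r = Real.exp (∑ j, w r j * Real.log (a0 j))
      - Real.exp (∑ j, w r j * Real.log (c0 j)) := by
    intro r
    rw [hgdef]
    simp only
    rw [prod_rpow_eq_exp ha0pos, prod_rpow_eq_exp hc0pos]
  have hchoice : ∀ r, ∃ l : ℝ, 0 < l ∧ l * g r = lam r * t r := by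
    intro r
    apply exists_pos_mul
    · intro h
      have : Real.exp (∑ j, w r j * Real.log (a0 j)) = Real.exp (∑ j, w r j * Real.log (c0 j)) := by
        have := hg r; rw [h] at this; linarith
      have := Real.exp_injective this
      have ht0 : t r = 0 := by rw [← hts r, this]; ring
      rw [ht0, mul_zero]
    · intro h
      rw [hg r, sub_pos, Real.exp_lt_exp] at h
      have : 0 < t r := by rw [← hts r]; linarith
      exact mul_pos (hl r) this
    · intro h
      rw [hg r, sub_neg, Real.exp_lt_exp] at h
      have : t r < 0 := by rw [← hts r]; linarith
      exact mul_neg_of_pos_of_neg (hl r) this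
  choose κ hκpos hκ using hchoice
  refine ⟨κ, hκpos, a0, c0, ha0pos, hc0pos, ?_, ?_, ?_⟩
  · intro hcon
    obtain ⟨j, hj⟩ := Function.ne_iff.mp hu0
    apply hj
    simp only [Pi.zero_apply]
    rw [← hsub j, congrFun hcon j, sub_self]
  · have : a0 - c0 = u := funext fun j => hsub j
    rw [this]; exact humem
  · funext i
    have hzero : ((stoich y y') *ᵥ (fun r => lam r * ((Zmat w) *ᵥ (fun j => mu j * u j)) r)) i
        = 0 := by
      rw [← Mlam_mulVec, hM, Pi.zero_apply]
    rw [stoich_mulVec_apply] at hzero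
    have hdiff : plf y y' κ w a0 i - plf y y' κ w c0 i = 0 := by
      rw [plf_sub, ← hzero]
      refine Finset.sum_congr rfl fun r _ => ?_
      congr 1
      exact hκ r
    linarith [hdiff]

/-- From a pair of positive states with equal rates to a kernel vector. -/
lemma construct_kernel (w : Fin m → Fin n → ℝ) {κ : Fin m → ℝ} (hκ : ∀ r, 0 < κ r)
    {a c : Fin n → ℝ} (ha : Pos a) (hc : Pos c) (hac : a ≠ c)
    (hmem : a - c ∈ stoichSpan y y') (heq : plf y y' κ w a = plf y y' κ w c) :
    ∃ lam mu, (∀ r, 0 < lam r) ∧ (∀ j, 0 < mu j) ∧ ∃ u ∈ stoichSpan y y', u ≠ 0 ∧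
      Mlam y y' w lam mu *ᵥ u = 0 := by
  classical
  set u : Fin n → ℝ := a - c with hudef
  set x : Fin n → ℝ := fun j => Real.log (a j) - Real.log (c j) with hxdef
  have hmuch : ∀ j, ∃ l : ℝ, 0 < l ∧ l * u j = x j := by
    intro j
    apply exists_pos_mul
    · intro h
      have : a j = c j := by
        have : a j - c j = 0 := h
        linarith
      simp [hxdef, this]
    · intro h
      have : c j < a j := by have : 0 < a j - c j := h; linarith
      have := Real.log_lt_log (hc j) this
      simp only [hxdef]; linarith
    · intro h
      have : a j < c j := by have : a j - c j < 0 := h; linarith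
      have := Real.log_lt_log (ha j) this
      simp only [hxdef]; linarith
  choose mu hmupos hmu using hmuch
  set t : Fin m → ℝ := fun r => ((Zmat w) *ᵥ x) r with htdef
  have hts : ∀ r, (∑ j, w r j * Real.log (a j)) - (∑ j, w r j * Real.log (c j)) = t r := by
    intro r
    have ht : t r = ∑ j, w r j * x j := rfl
    rw [ht, ← Finset.sum_sub_distrib]
    exact Finset.sum_congr rfl fun j _ => by simp only [hxdef]; ring
  set g : Fin m → ℝ := fun r => (∏ j, a j ^ w r j) - (∏ j, c j ^ w r j) with hgdef
  have hg : ∀ r, g r = Real.exp (∑ j, w r j * Real.log (a j))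
      - Real.exp (∑ j, w r j * Real.log (c j)) := by
    intro r
    rw [hgdef]
    simp only
    rw [prod_rpow_eq_exp ha, prod_rpow_eq_exp hc]
  have hlch : ∀ r, ∃ l : ℝ, 0 < l ∧ l * t r = κ r * g r := by
    intro r
    apply exists_pos_mul
    · intro h
      have hsa : (∑ j, w r j * Real.log (a j)) = (∑ j, w r j * Real.log (c j)) := by
        have := hts r; rw [h] at this; linarith
      rw [hg r, hsa, sub_self, mul_zero]
    · intro h
      have : Real.exp (∑ j, w r j * Real.log (c j)) < Real.exp (∑ j, w r j * Real.log (a j)) := by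
        apply Real.exp_lt_exp.mpr
        have := hts r; linarith
      have : 0 < g r := by rw [hg r]; linarith
      exact mul_pos (hκ r) this
    · intro h
      have : Real.exp (∑ j, w r j * Real.log (a j)) < Real.exp (∑ j, w r j * Real.log (c j)) := by
        apply Real.exp_lt_exp.mpr
        have := hts r; linarith
      have : g r < 0 := by rw [hg r]; linarith
      exact mul_neg_of_pos_of_neg (hκ r) this
  choose lam hlampos hlam using hlch
  refine ⟨lam, mu, hlampos, hmupos, u, hmem, sub_ne_zero.mpr hac, ?_⟩
  have hxu : (fun j => mu j * u j) = x := funext fun j => hmu j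
  rw [Mlam_mulVec, hxu]
  funext i
  have hplf : plf y y' κ w a i - plf y y' κ w c i = 0 := by rw [heq]; ring
  rw [plf_sub] at hplf
  rw [stoich_mulVec_apply]
  simp only [Pi.zero_apply]
  rw [← hplf]
  refine Finset.sum_congr rfl fun r _ => ?_
  congr 1
  exact hlam r

def qdet (w : Fin m → Fin n → ℝ) (lam : Fin m → ℝ) (mu : Fin n → ℝ) : ℝ :=
  (Nmat y y' b * Matrix.diagonal lam * Zmat w * Matrix.diagonal mu * Bmat y y' b).det

lemma det_BMB (w : Fin m → Fin n → ℝ) (lam : Fin m → ℝ) (mu : Fin n → ℝ) :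
    ((Bmat y y' b)ᵀ * Mlam y y' w lam mu * Bmat y y' b).det
      = ((Bmat y y' b)ᵀ * Bmat y y' b).det * qdet y y' b w lam mu := by
  have h : (Bmat y y' b)ᵀ * Mlam y y' w lam mu * Bmat y y' b
      = ((Bmat y y' b)ᵀ * Bmat y y' b) *
        (Nmat y y' b * Matrix.diagonal lam * Zmat w * Matrix.diagonal mu * Bmat y y' b) := by
    rw [Mlam, stoich_eq_mul y y' b]
    simp only [Matrix.mul_assoc]
  rw [h, Matrix.det_mul, qdet]

/-- The key criterion: injectivity iff nonvanishing of the reduced determinant. -/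
theorem inj_iff_qdet (w : Fin m → Fin n → ℝ) :
    InjOverPL y y' w ↔ ∀ lam mu, (∀ r, 0 < lam r) → (∀ j, 0 < mu j) →
      qdet y y' b w lam mu ≠ 0 := by
  constructor
  · intro hInj lam mu hl hm hq0
    have hdet : ((Bmat y y' b)ᵀ * Mlam y y' w lam mu * Bmat y y' b).det = 0 := by
      rw [det_BMB, hq0, mul_zero]
    obtain ⟨u, humem, hu0, hM⟩ := (ker_iff y y' b _ (Mlam_mem y y' w lam mu)).mpr hdet
    obtain ⟨κ, hκpos, a, c, hapos, hcpos, hac, hmem, heq⟩ :=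
      construct_ab y y' w hl hm humem hu0 hM
    exact hInj κ hκpos a c hapos hcpos hac hmem heq
  · intro hq κ hκ a c ha hc hac hmem heq
    obtain ⟨lam, mu, hl, hm, u, humem, hu0, hM⟩ :=
      construct_kernel y y' w hκ ha hc hac hmem heq
    have hdet := (ker_iff y y' b _ (Mlam_mem y y' w lam mu)).mp ⟨u, humem, hu0, hM⟩
    rw [det_BMB] at hdet
    rcases mul_eq_zero.mp hdet with h | h
    · exact det_BtB_ne_zero y y' b h
    · exact hq lam mu hl hm h

end Crit

section Expand
variable {n m s : ℕ} (y y' : Fin m → Fin n → ℝ) (b : Module.Basis (Fin s) ℝ (stoichSpan y y'))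

lemma det_mulDiag_submatrix (X : Matrix (Fin s) (Fin m) ℝ) (lam : Fin m → ℝ)
    (C : Finset (Fin m)) (hC : C.card = s) :
    ((X * Matrix.diagonal lam).submatrix id (semb C hC)).det
      = (∏ r ∈ C, lam r) * (X.submatrix id (semb C hC)).det := by
  have h1 : (X * Matrix.diagonal lam).submatrix id (semb C hC)
      = (X.submatrix id (semb C hC)) * Matrix.diagonal (lam ∘ semb C hC) := by
    ext i k
    simp [Matrix.mul_diagonal]
  rw [h1, Matrix.det_mul, Matrix.det_diagonal]
  have h2 : ∏ k, (lam ∘ semb C hC) k = ∏ r ∈ C, lam r := by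
    rw [← Finset.prod_coe_sort C lam]
    exact Fintype.prod_equiv (C.orderIsoOfFin hC).toEquiv _ _ (fun k => rfl)
  rw [h2]; ring

lemma det_diagMul_submatrix (X : Matrix (Fin n) (Fin s) ℝ) (mu : Fin n → ℝ)
    (J : Finset (Fin n)) (hJ : J.card = s) :
    ((Matrix.diagonal mu * X).submatrix (semb J hJ) id).det
      = (∏ j ∈ J, mu j) * (X.submatrix (semb J hJ) id).det := by
  have h1 : (Matrix.diagonal mu * X).submatrix (semb J hJ) id
      = Matrix.diagonal (mu ∘ semb J hJ) * (X.submatrix (semb J hJ) id) := by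
    ext i k
    simp [Matrix.diagonal_mul]
  rw [h1, Matrix.det_mul, Matrix.det_diagonal]
  have h2 : ∏ k, (mu ∘ semb J hJ) k = ∏ j ∈ J, mu j := by
    rw [← Finset.prod_coe_sort J mu]
    exact Fintype.prod_equiv (J.orderIsoOfFin hJ).toEquiv _ _ (fun k => rfl)
  rw [h2]

lemma subDetA_semb (J : Finset (Fin n)) (C : Finset (Fin m)) (hJ : J.card = s) (hC : C.card = s) :
    subDetA y y' s J C hJ hC = ((stoich y y').submatrix (semb J hJ) (semb C hC)).det := rfl

lemma subDetZ_semb (w : Fin m → Fin n → ℝ) (C : Finset (Fin m)) (J : Finset (Fin n))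
    (hC : C.card = s) (hJ : J.card = s) :
    subDetZ w s C J hC hJ = ((Zmat w).submatrix (semb C hC) (semb J hJ)).det := rfl

lemma subDetA_factor (J : Finset (Fin n)) (C : Finset (Fin m)) (hJ : J.card = s) (hC : C.card = s) :
    subDetA y y' s J C hJ hC
      = ((Bmat y y' b).submatrix (semb J hJ) id).det *
        ((Nmat y y' b).submatrix id (semb C hC)).det := by
  rw [subDetA_semb, stoich_eq_mul y y' b]
  have h : (Bmat y y' b * Nmat y y' b).submatrix (semb J hJ) (semb C hC)
      = (Bmat y y' b).submatrix (semb J hJ) id * (Nmat y y' b).submatrix id (semb C hC) := by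
    have := Matrix.submatrix_mul_equiv (Bmat y y' b) (Nmat y y' b) (semb J hJ)
      (Equiv.refl (Fin s)) (semb C hC)
    simpa using this.symm
  rw [h, Matrix.det_mul]

theorem qdet_expand (w : Fin m → Fin n → ℝ) (lam : Fin m → ℝ) (mu : Fin n → ℝ) :
    qdet y y' b w lam mu
      = ∑ C : {C : Finset (Fin m) // C.card = s}, ∑ J : {J : Finset (Fin n) // J.card = s},
        (∏ r ∈ C.1, lam r) * (∏ j ∈ J.1, mu j) *
          (subDetA y y' s J.1 C.1 J.2 C.2 * subDetZ w s C.1 J.1 C.2 J.2) := by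
  unfold qdet
  have hassoc : Nmat y y' b * Matrix.diagonal lam * Zmat w * Matrix.diagonal mu * Bmat y y' b
      = (Nmat y y' b * Matrix.diagonal lam) * (Zmat w * (Matrix.diagonal mu * Bmat y y' b)) := by
    simp only [Matrix.mul_assoc]
  rw [hassoc, cauchy_binet]
  refine Finset.sum_congr rfl fun C _ => ?_
  rw [det_mulDiag_submatrix]
  have hsub : (Zmat w * (Matrix.diagonal mu * Bmat y y' b)).submatrix (semb C.1 C.2) id
      = (Zmat w).submatrix (semb C.1 C.2) id * (Matrix.diagonal mu * Bmat y y' b) := by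
    have := Matrix.submatrix_mul_equiv (Zmat w) (Matrix.diagonal mu * Bmat y y' b)
      (semb C.1 C.2) (Equiv.refl (Fin n)) id
    simpa using this.symm
  rw [hsub, cauchy_binet, Finset.mul_sum]
  refine Finset.sum_congr rfl fun J _ => ?_
  rw [Matrix.submatrix_submatrix, det_diagMul_submatrix, subDetA_factor y y' b,
    subDetZ_semb]
  have hcomp : (Zmat w).submatrix (semb C.1 C.2 ∘ id) (id ∘ semb J.1 J.2)
      = (Zmat w).submatrix (semb C.1 C.2) (semb J.1 J.2) := rfl
  rw [hcomp]
  ring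

end Expand

section Analysis

lemma rsign_eq_one_iff {x : ℝ} : Real.sign x = 1 ↔ 0 < x := by
  constructor
  · intro h
    rcases lt_trichotomy x 0 with h1 | h1 | h1
    · rw [Real.sign_of_neg h1] at h; norm_num at h
    · rw [h1, Real.sign_zero] at h; norm_num at h
    · exact h1
  · exact Real.sign_of_pos

lemma rsign_eq_neg_one_iff {x : ℝ} : Real.sign x = -1 ↔ x < 0 := by
  constructor
  · intro h
    rcases lt_trichotomy x 0 with h1 | h1 | h1
    · exact h1
    · rw [h1, Real.sign_zero] at h; norm_num at h
    · rw [Real.sign_of_pos h1] at h; norm_num at h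
  · exact Real.sign_of_neg

variable {n m s : ℕ}

/-- Σ(I) is closed under convex combination. -/
lemma insigma_convex {I w w' : Fin m → Fin n → ℝ} (hw : InSigma I w) (hw' : InSigma I w')
    {t : ℝ} (h0 : 0 ≤ t) (h1 : t ≤ 1) :
    InSigma I (fun r i => (1 - t) * w r i + t * w' r i) := by
  intro r i
  show Real.sign ((1 - t) * w r i + t * w' r i) = I r i
  have h := hw r i
  have h' := hw' r i
  rcases lt_trichotomy (w r i) 0 with hlt | heq | hgt
  · have hI : I r i = -1 := by rw [← h, Real.sign_of_neg hlt]
    have hw'lt : w' r i < 0 := rsign_eq_neg_one_iff.mp (h'.trans hI)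
    have hcomb : (1 - t) * w r i + t * w' r i < 0 := by
      have hB : t * w' r i ≤ 0 := mul_nonpos_of_nonneg_of_nonpos h0 hw'lt.le
      by_cases ht : t = 1
      · rw [ht]; simp; linarith
      · have : (1 - t) * w r i < 0 := mul_neg_of_pos_of_neg (by cases lt_or_eq_of_le h1 with
          | inl h => linarith
          | inr h => exact absurd h ht) hlt
        linarith
    rw [Real.sign_of_neg hcomb, hI]
  · have hI : I r i = 0 := by rw [← h, heq, Real.sign_zero]
    have hw'0 : w' r i = 0 := Real.sign_eq_zero_iff.mp (h'.trans hI)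
    rw [heq, hw'0]
    simp [hI]
  · have hI : I r i = 1 := by rw [← h, Real.sign_of_pos hgt]
    have hw'gt : 0 < w' r i := rsign_eq_one_iff.mp (h'.trans hI)
    have hcomb : 0 < (1 - t) * w r i + t * w' r i := by
      have hB : 0 ≤ t * w' r i := mul_nonneg h0 hw'gt.le
      by_cases ht : t = 1
      · rw [ht]; simp; linarith
      · have : 0 < (1 - t) * w r i := mul_pos (by cases lt_or_eq_of_le h1 with
          | inl h => linarith
          | inr h => exact absurd h ht) hgt
        linarith
    rw [Real.sign_of_pos hcomb, hI]

lemma convex_pos {a c t : ℝ} (ha : 0 < a) (hc : 0 < c) (h0 : 0 ≤ t) (h1 : t ≤ 1) :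
    0 < (1 - t) * a + t * c := by
  rcases eq_or_lt_of_le h0 with rfl | ht0
  · simp; linarith
  · have h2 : 0 < t * c := mul_pos ht0 hc
    have h3 : 0 ≤ (1 - t) * a := mul_nonneg (by linarith) ha.le
    linarith

variable (y y' : Fin m → Fin n → ℝ) (b : Module.Basis (Fin s) ℝ (stoichSpan y y'))

lemma qdet_continuous :
    Continuous (fun x : (Fin m → Fin n → ℝ) × (Fin m → ℝ) × (Fin n → ℝ) =>
      qdet y y' b x.1 x.2.1 x.2.2) := by
  apply Continuous.matrix_det
  apply Continuous.matrix_mul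
  · apply Continuous.matrix_mul
    · apply Continuous.matrix_mul
      · apply Continuous.matrix_mul
        · exact continuous_const
        · exact Continuous.matrix_diagonal (continuous_fst.comp continuous_snd)
      · exact continuous_matrix
          (fun r i => (continuous_apply i).comp ((continuous_apply r).comp continuous_fst))
    · exact Continuous.matrix_diagonal (continuous_snd.comp continuous_snd)
  · exact continuous_const
/-- Sign constancy of `qdet` over `Σ(I) × pos × pos`. -/
lemma qdet_sign_const {I : Fin m → Fin n → ℝ}
    (hq : ∀ w lam mu, InSigma I w → (∀ r, 0 < lam r) → (∀ j, 0 < mu j) →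
      qdet y y' b w lam mu ≠ 0)
    {w w' : Fin m → Fin n → ℝ} {lam lam' : Fin m → ℝ} {mu mu' : Fin n → ℝ}
    (hw : InSigma I w) (hw' : InSigma I w')
    (hlam : ∀ r, 0 < lam r) (hlam' : ∀ r, 0 < lam' r)
    (hmu : ∀ j, 0 < mu j) (hmu' : ∀ j, 0 < mu' j) :
    0 < qdet y y' b w lam mu * qdet y y' b w' lam' mu' := by
  set f : ℝ → ℝ := fun t => qdet y y' b (fun r i => (1 - t) * w r i + t * w' r i)
    (fun r => (1 - t) * lam r + t * lam' r) (fun j => (1 - t) * mu j + t * mu' j) with hfdef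
  have hcont : Continuous f := by
    rw [hfdef]
    unfold qdet
    apply Continuous.matrix_det
    apply Continuous.matrix_mul
    · apply Continuous.matrix_mul
      · apply Continuous.matrix_mul
        · apply Continuous.matrix_mul
          · exact continuous_const
          · exact Continuous.matrix_diagonal (continuous_pi fun r =>
              ((continuous_const.sub continuous_id).mul continuous_const).add
                (continuous_id.mul continuous_const))
        · exact continuous_matrix (fun r i =>
            ((continuous_const.sub continuous_id).mul continuous_const).add
              (continuous_id.mul continuous_const))
      · exact Continuous.matrix_diagonal (continuous_pi fun j =>
          ((continuous_const.sub continuous_id).mul continuous_const).add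
            (continuous_id.mul continuous_const))
    · exact continuous_const
  have hne : ∀ t ∈ Set.Icc (0:ℝ) 1, f t ≠ 0 := fun t ht =>
    hq _ _ _ (insigma_convex hw hw' ht.1 ht.2)
      (fun r => convex_pos (hlam r) (hlam' r) ht.1 ht.2)
      (fun j => convex_pos (hmu j) (hmu' j) ht.1 ht.2)
  have hf0 : f 0 = qdet y y' b w lam mu := by
    have e1 : (fun r i => (1 - (0:ℝ)) * w r i + 0 * w' r i) = w := by funext r i; ring
    have e2 : (fun r => (1 - (0:ℝ)) * lam r + 0 * lam' r) = lam := by funext r; ring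
    have e3 : (fun j => (1 - (0:ℝ)) * mu j + 0 * mu' j) = mu := by funext j; ring
    rw [hfdef]; simp only; rw [e1, e2, e3]
  have hf1 : f 1 = qdet y y' b w' lam' mu' := by
    have e1 : (fun r i => (1 - (1:ℝ)) * w r i + 1 * w' r i) = w' := by funext r i; ring
    have e2 : (fun r => (1 - (1:ℝ)) * lam r + 1 * lam' r) = lam' := by funext r; ring
    have e3 : (fun j => (1 - (1:ℝ)) * mu j + 1 * mu' j) = mu' := by funext j; ring
    rw [hfdef]; simp only; rw [e1, e2, e3]
  rw [← hf0, ← hf1]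
  rcases lt_trichotomy (f 0) 0 with h0 | h0 | h0
  · rcases lt_trichotomy (f 1) 0 with h1 | h1 | h1
    · exact mul_pos_of_neg_of_neg h0 h1
    · exact absurd h1 (hne 1 ⟨zero_le_one, le_refl 1⟩)
    · exfalso
      have h0mem : (0:ℝ) ∈ Set.Icc (f 0) (f 1) := ⟨h0.le, h1.le⟩
      obtain ⟨t, ht, hft⟩ := intermediate_value_Icc zero_le_one hcont.continuousOn h0mem
      exact hne t ht hft
  · exact absurd h0 (hne 0 ⟨le_refl 0, zero_le_one⟩)
  · rcases lt_trichotomy (f 1) 0 with h1 | h1 | h1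
    · exfalso
      have h0mem : (0:ℝ) ∈ Set.Icc (f 1) (f 0) := ⟨h1.le, h0.le⟩
      obtain ⟨t, ht, hft⟩ := intermediate_value_Icc' zero_le_one hcont.continuousOn h0mem
      exact hne t ht hft
    · exact absurd h1 (hne 1 ⟨zero_le_one, le_refl 1⟩)
    · exact mul_pos h0 h1

end Analysis

section Coeff
variable {n m s : ℕ} (y y' : Fin m → Fin n → ℝ)

/-- The product of the two minors, as a coefficient. -/
def Pco (w : Fin m → Fin n → ℝ) (C : {C : Finset (Fin m) // C.card = s})
    (J : {J : Finset (Fin n) // J.card = s}) : ℝ :=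
  subDetA y y' s J.1 C.1 J.2 C.2 * subDetZ w s C.1 J.1 C.2 J.2

variable (b : Module.Basis (Fin s) ℝ (stoichSpan y y'))

lemma qdet_expand' (w : Fin m → Fin n → ℝ) (lam : Fin m → ℝ) (mu : Fin n → ℝ) :
    qdet y y' b w lam mu
      = ∑ p : {C : Finset (Fin m) // C.card = s} × {J : Finset (Fin n) // J.card = s},
        (∏ r ∈ p.1.1, lam r) * (∏ j ∈ p.2.1, mu j) * Pco y y' w p.1 p.2 := by
  rw [qdet_expand]
  exact (Fintype.sum_prod_type
    (fun p : {C : Finset (Fin m) // C.card = s} × {J : Finset (Fin n) // J.card = s} =>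
      (∏ r ∈ p.1.1, lam r) * (∏ j ∈ p.2.1, mu j) * Pco y y' w p.1 p.2)).symm

lemma prod_ite_zpow (t : ℝ) (ht : t ≠ 0) (C C0 : Finset (Fin m)) :
    (∏ r ∈ C, (if r ∈ C0 then t else t⁻¹))
      = t ^ (((C ∩ C0).card : ℤ) - ((C \ C0).card : ℤ)) := by
  classical
  rw [Finset.prod_ite, Finset.prod_const, Finset.prod_const, Finset.filter_mem_eq_inter]
  have h1 : (C.filter fun x => x ∉ C0) = C \ C0 := (Finset.sdiff_eq_filter C C0).symm
  rw [h1]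
  rw [← zpow_natCast t ((C ∩ C0).card), ← zpow_natCast t⁻¹ ((C \ C0).card), _root_.inv_zpow,
    ← _root_.zpow_neg, ← zpow_add₀ ht, sub_eq_add_neg]

lemma coeff_nonneg (w : Fin m → Fin n → ℝ) (e : ℝ)
    (hq : ∀ lam mu, (∀ r, 0 < lam r) → (∀ j, 0 < mu j) → 0 < e * qdet y y' b w lam mu)
    (C0 : {C : Finset (Fin m) // C.card = s}) (J0 : {J : Finset (Fin n) // J.card = s}) :
    0 ≤ e * Pco y y' w C0 J0 := by
  classical
  set ex : {C : Finset (Fin m) // C.card = s} × {J : Finset (Fin n) // J.card = s} → ℤ :=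
    fun p => ((((p.1.1 ∩ C0.1).card : ℤ) - ((p.1.1 \ C0.1).card : ℤ))
      + (((p.2.1 ∩ J0.1).card : ℤ) - ((p.2.1 \ J0.1).card : ℤ))) - 2 * (s : ℤ) with hexdef
  have hC_card : ∀ C : {C : Finset (Fin m) // C.card = s},
      (C.1 ∩ C0.1).card + (C.1 \ C0.1).card = s := fun C => by
    rw [Finset.card_inter_add_card_sdiff]; exact C.2
  have hJ_card : ∀ J : {J : Finset (Fin n) // J.card = s},
      (J.1 ∩ J0.1).card + (J.1 \ J0.1).card = s := fun J => by
    rw [Finset.card_inter_add_card_sdiff]; exact J.2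
  have hex0 : ex (C0, J0) = 0 := by
    simp only [hexdef, Finset.inter_self, Finset.sdiff_self, Finset.card_empty, C0.2, J0.2]
    push_cast
    ring
  have hexneg : ∀ p, p ≠ (C0, J0) → ex p < 0 := by
    intro p hp
    have h1 := hC_card p.1
    have h2 := hJ_card p.2
    have hne : p.1.1 \ C0.1 ≠ ∅ ∨ p.2.1 \ J0.1 ≠ ∅ := by
      by_contra hcon
      push_neg at hcon
      apply hp
      have e1 : p.1 = C0 := Subtype.ext (Finset.eq_of_subset_of_card_le
        (Finset.sdiff_eq_empty_iff_subset.mp hcon.1) (by rw [C0.2, p.1.2]))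
      have e2 : p.2 = J0 := Subtype.ext (Finset.eq_of_subset_of_card_le
        (Finset.sdiff_eq_empty_iff_subset.mp hcon.2) (by rw [J0.2, p.2.2]))
      exact Prod.ext e1 e2
    rw [hexdef]
    simp only
    rcases hne with h | h
    · have hpos : 0 < (p.1.1 \ C0.1).card := Finset.card_pos.mpr (Finset.nonempty_of_ne_empty h)
      omega
    · have hpos : 0 < (p.2.1 \ J0.1).card := Finset.card_pos.mpr (Finset.nonempty_of_ne_empty h)
      omega
  set G : ℝ → ℝ := fun t =>
    ∑ p : {C : Finset (Fin m) // C.card = s} × {J : Finset (Fin n) // J.card = s},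
      (e * Pco y y' w p.1 p.2) * t ^ (ex p) with hGdef
  have hGeq : ∀ t : ℝ, 0 < t →
      G t = (e * qdet y y' b w (fun r => if r ∈ C0.1 then t else t⁻¹)
        (fun j => if j ∈ J0.1 then t else t⁻¹)) * t ^ (-(2 * (s : ℤ))) := by
    intro t ht
    rw [hGdef]
    simp only
    rw [qdet_expand' y y' b, Finset.mul_sum, Finset.sum_mul]
    refine Finset.sum_congr rfl fun p _ => ?_
    rw [prod_ite_zpow t ht.ne' p.1.1 C0.1, prod_ite_zpow t ht.ne' p.2.1 J0.1, hexdef]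
    simp only
    rw [sub_eq_add_neg, zpow_add₀ ht.ne', zpow_add₀ ht.ne']
    ring
  have hGpos : ∀ᶠ t in Filter.atTop, 0 ≤ G t := by
    filter_upwards [Filter.eventually_gt_atTop (0:ℝ)] with t ht
    rw [hGeq t ht]
    have hl : ∀ r, 0 < (if r ∈ C0.1 then t else t⁻¹) := by
      intro r; split
      · exact ht
      · exact inv_pos.mpr ht
    have hm : ∀ j, 0 < (if j ∈ J0.1 then t else t⁻¹) := by
      intro j; split
      · exact ht
      · exact inv_pos.mpr ht
    exact (mul_pos (hq _ _ hl hm) (zpow_pos ht _)).le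
  have htend : Filter.Tendsto G Filter.atTop (nhds (e * Pco y y' w C0 J0)) := by
    have h1 : Filter.Tendsto G Filter.atTop
        (nhds (∑ p : {C : Finset (Fin m) // C.card = s} × {J : Finset (Fin n) // J.card = s},
          if p = (C0, J0) then e * Pco y y' w C0 J0 else 0)) := by
      rw [hGdef]
      apply tendsto_finset_sum
      intro p _
      by_cases hp : p = (C0, J0)
      · rw [if_pos hp, hp]
        have : (fun t : ℝ => (e * Pco y y' w (C0, J0).1 (C0, J0).2) * t ^ (ex (C0, J0)))
            = fun _ : ℝ => e * Pco y y' w C0 J0 := by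
          funext t
          rw [hex0, zpow_zero, mul_one]
        rw [this]
        exact tendsto_const_nhds
      · rw [if_neg hp]
        have := (tendsto_zpow_atTop_zero (hexneg p hp)).const_mul (e * Pco y y' w p.1 p.2)
        simpa using this
    simpa using h1
  exact ge_of_tendsto htend hGpos

lemma qdet_pos_of_coeffs (w : Fin m → Fin n → ℝ) (e : ℝ)
    (hco : ∀ (C : {C : Finset (Fin m) // C.card = s}) (J : {J : Finset (Fin n) // J.card = s}),
      0 ≤ e * Pco y y' w C J)
    (hex : ∃ (C : {C : Finset (Fin m) // C.card = s}) (J : {J : Finset (Fin n) // J.card = s}),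
      e * Pco y y' w C J ≠ 0) :
    ∀ lam mu, (∀ r, 0 < lam r) → (∀ j, 0 < mu j) → 0 < e * qdet y y' b w lam mu := by
  intro lam mu hl hm
  rw [qdet_expand' y y' b, Finset.mul_sum]
  apply Finset.sum_pos'
  · intro p _
    have hrw : e * ((∏ r ∈ p.1.1, lam r) * (∏ j ∈ p.2.1, mu j) * Pco y y' w p.1 p.2)
        = ((∏ r ∈ p.1.1, lam r) * (∏ j ∈ p.2.1, mu j)) * (e * Pco y y' w p.1 p.2) := by ring
    rw [hrw]
    exact mul_nonneg (mul_nonneg (Finset.prod_pos (fun r _ => hl r)).le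
      (Finset.prod_pos (fun j _ => hm j)).le) (hco p.1 p.2)
  · obtain ⟨C, J, hCJ⟩ := hex
    refine ⟨(C, J), Finset.mem_univ _, ?_⟩
    have hrw : e * ((∏ r ∈ C.1, lam r) * (∏ j ∈ J.1, mu j) * Pco y y' w C J)
        = ((∏ r ∈ C.1, lam r) * (∏ j ∈ J.1, mu j)) * (e * Pco y y' w C J) := by ring
    rw [hrw]
    exact mul_pos (mul_pos (Finset.prod_pos (fun r _ => hl r))
      (Finset.prod_pos (fun j _ => hm j)))
      (lt_of_le_of_ne (hco C J) (Ne.symm hCJ))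

end Coeff

section Multilinear
variable {n m s : ℕ}

def updW (w : Fin m → Fin n → ℝ) (p : Fin m × Fin n) (t : ℝ) : Fin m → Fin n → ℝ :=
  fun r i => if r = p.1 ∧ i = p.2 then t else w r i

lemma updW_self (w : Fin m → Fin n → ℝ) (p : Fin m × Fin n) : updW w p (w p.1 p.2) = w := by
  funext r i
  unfold updW
  split
  · rename_i h
    rw [h.1, h.2]
  · rfl

lemma updW_insigma {I w : Fin m → Fin n → ℝ} (hw : InSigma I w) (p : Fin m × Fin n) {t : ℝ}
    (ht : Real.sign t = I p.1 p.2) : InSigma I (updW w p t) := by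
  intro r i
  show Real.sign (if r = p.1 ∧ i = p.2 then t else w r i) = I r i
  split
  · rename_i h
    rw [ht, h.1, h.2]
  · exact hw r i

lemma subDetZ_affine (C : Finset (Fin m)) (J : Finset (Fin n)) (hC : C.card = s)
    (hJ : J.card = s) (w : Fin m → Fin n → ℝ) (p : Fin m × Fin n) :
    ∃ α β : ℝ, ∀ t, subDetZ (updW w p t) s C J hC hJ = α * t + β := by
  classical
  by_cases hp : p.1 ∈ C ∧ p.2 ∈ J
  · obtain ⟨hpC, hpJ⟩ := hp
    set a : Fin s := (C.orderIsoOfFin hC).symm ⟨p.1, hpC⟩ with hadef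
    set bi : Fin s := (J.orderIsoOfFin hJ).symm ⟨p.2, hpJ⟩ with hbidef
    have hsC : semb C hC a = p.1 := by
      rw [hadef]; simp [semb]
    have hsJ : semb J hJ bi = p.2 := by
      rw [hbidef]; simp [semb]
    set M0 : Matrix (Fin s) (Fin s) ℝ := (Zmat w).submatrix (semb C hC) (semb J hJ) with hM0
    set v0 : Fin s → ℝ := fun k => if k = bi then 0 else M0 a k with hv0
    refine ⟨(M0.updateRow a (Pi.single bi 1)).det, (M0.updateRow a v0).det, fun t => ?_⟩
    have hmat : (Zmat (updW w p t)).submatrix (semb C hC) (semb J hJ)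
        = M0.updateRow a (v0 + t • (Pi.single bi (1:ℝ) : Fin s → ℝ)) := by
      ext k l
      by_cases hk : k = a
      · subst hk
        rw [Matrix.submatrix_apply, Matrix.updateRow_self]
        show (if semb C hC a = p.1 ∧ semb J hJ l = p.2 then t else w (semb C hC a) (semb J hJ l))
          = v0 l + t * (Pi.single bi (1:ℝ) : Fin s → ℝ) l
        by_cases hl : l = bi
        · subst hl
          rw [if_pos ⟨hsC, hsJ⟩]
          simp [hv0]
        · have hne : semb J hJ l ≠ p.2 := by
            intro hcon
            exact hl (semb_injective J hJ (by rw [hcon, hsJ]))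
          rw [if_neg (by intro hcon; exact hne hcon.2)]
          rw [hv0]
          simp only [if_neg hl, Pi.single_eq_of_ne hl, mul_zero, add_zero]
          rw [hM0, Matrix.submatrix_apply]
          rfl
      · rw [Matrix.submatrix_apply, Matrix.updateRow_ne hk]
        have hne : semb C hC k ≠ p.1 := by
          intro hcon
          exact hk (semb_injective C hC (by rw [hcon, hsC]))
        show (if semb C hC k = p.1 ∧ semb J hJ l = p.2 then t else w (semb C hC k) (semb J hJ l))
          = M0 k l
        rw [if_neg (by intro hcon; exact hne hcon.1), hM0]
        rfl
    rw [subDetZ_semb, hmat, Matrix.det_updateRow_add, Matrix.det_updateRow_smul]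
    ring
  · refine ⟨0, subDetZ w s C J hC hJ, fun t => ?_⟩
    have hmat : (Zmat (updW w p t)).submatrix (semb C hC) (semb J hJ)
        = (Zmat w).submatrix (semb C hC) (semb J hJ) := by
      ext k l
      have hcond : ¬(semb C hC k = p.1 ∧ semb J hJ l = p.2) := by
        rintro ⟨h1, h2⟩
        exact hp ⟨h1 ▸ semb_mem C hC k, h2 ▸ semb_mem J hJ l⟩
      show (if semb C hC k = p.1 ∧ semb J hJ l = p.2 then t else w (semb C hC k) (semb J hJ l))
        = w (semb C hC k) (semb J hJ l)
      rw [if_neg hcond]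
    rw [subDetZ_semb, hmat, ← subDetZ_semb]
    ring

lemma step_zero {I : Fin m → Fin n → ℝ} (C : Finset (Fin m)) (J : Finset (Fin n))
    (hC : C.card = s) (hJ : J.card = s) (d : ℝ) (hd : d ≠ 0)
    (hsgn : ∀ w', InSigma I w' → 0 ≤ d * subDetZ w' s C J hC hJ)
    {w : Fin m → Fin n → ℝ} (hw : InSigma I w) (hF : subDetZ w s C J hC hJ = 0)
    (p : Fin m × Fin n) {tv : ℝ} (htv : Real.sign tv = I p.1 p.2) :
    subDetZ (updW w p tv) s C J hC hJ = 0 := by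
  obtain ⟨α, β, hαβ⟩ := subDetZ_affine C J hC hJ w p
  have hIp : Real.sign (w p.1 p.2) = I p.1 p.2 := hw p.1 p.2
  have hval : α * (w p.1 p.2) + β = 0 := by
    rw [← hαβ, updW_self]; exact hF
  rcases lt_trichotomy (w p.1 p.2) 0 with hneg | hzero | hpos
  · have hI : I p.1 p.2 = -1 := by rw [← hIp, Real.sign_of_neg hneg]
    have hall : ∀ t : ℝ, t < 0 → 0 ≤ d * α * (t - w p.1 p.2) := by
      intro t htneg
      have h1 : 0 ≤ d * (α * t + β) := by
        rw [← hαβ]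
        exact hsgn _ (updW_insigma hw p (by rw [Real.sign_of_neg htneg, hI]))
      have h2 : d * (α * w p.1 p.2 + β) = 0 := by rw [hval]; ring
      have h3 : d * α * (t - w p.1 p.2) = d * (α * t + β) - d * (α * w p.1 p.2 + β) := by ring
      linarith
    have hα : d * α = 0 := by
      by_contra hda
      rcases lt_or_gt_of_ne hda with hlt | hgt
      · have := hall (w p.1 p.2 / 2) (by linarith)
        nlinarith
      · have := hall (w p.1 p.2 - 1) (by linarith)
        nlinarith
    have hα0 : α = 0 := by
      rcases mul_eq_zero.mp hα with h | h
      · exact absurd h hd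
      · exact h
    have hβ0 : β = 0 := by rw [hα0, zero_mul, zero_add] at hval; exact hval
    rw [hαβ tv, hα0, hβ0]; ring
  · have hI : I p.1 p.2 = 0 := by rw [← hIp, hzero, Real.sign_zero]
    have htv0 : tv = 0 := Real.sign_eq_zero_iff.mp (htv.trans hI)
    have h4 : updW w p tv = w := by
      rw [htv0, show (0:ℝ) = w p.1 p.2 from hzero.symm]
      exact updW_self w p
    rw [h4]
    exact hF
  · have hI : I p.1 p.2 = 1 := by rw [← hIp, Real.sign_of_pos hpos]
    have hall : ∀ t : ℝ, 0 < t → 0 ≤ d * α * (t - w p.1 p.2) := by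
      intro t htpos
      have h1 : 0 ≤ d * (α * t + β) := by
        rw [← hαβ]
        exact hsgn _ (updW_insigma hw p (by rw [Real.sign_of_pos htpos, hI]))
      have h2 : d * (α * w p.1 p.2 + β) = 0 := by rw [hval]; ring
      have h3 : d * α * (t - w p.1 p.2) = d * (α * t + β) - d * (α * w p.1 p.2 + β) := by ring
      linarith
    have hα : d * α = 0 := by
      by_contra hda
      rcases lt_or_gt_of_ne hda with hlt | hgt
      · have := hall (w p.1 p.2 + 1) (by linarith)
        nlinarith
      · have := hall (w p.1 p.2 / 2) (by linarith)
        nlinarith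
    have hα0 : α = 0 := by
      rcases mul_eq_zero.mp hα with h | h
      · exact absurd h hd
      · exact h
    have hβ0 : β = 0 := by rw [hα0, zero_mul, zero_add] at hval; exact hval
    rw [hαβ tv, hα0, hβ0]; ring

lemma zero_propagate {I : Fin m → Fin n → ℝ} (C : Finset (Fin m)) (J : Finset (Fin n))
    (hC : C.card = s) (hJ : J.card = s) (d : ℝ) (hd : d ≠ 0)
    (hsgn : ∀ w', InSigma I w' → 0 ≤ d * subDetZ w' s C J hC hJ)
    {w0 w1 : Fin m → Fin n → ℝ} (h0 : InSigma I w0) (h1 : InSigma I w1)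
    (hF0 : subDetZ w0 s C J hC hJ = 0) : subDetZ w1 s C J hC hJ = 0 := by
  classical
  set mix : Finset (Fin m × Fin n) → (Fin m → Fin n → ℝ) :=
    fun S => fun r i => if (r, i) ∈ S then w1 r i else w0 r i with hmixdef
  have hmixsig : ∀ S, InSigma I (mix S) := by
    intro S r i
    show Real.sign (if (r, i) ∈ S then w1 r i else w0 r i) = I r i
    split
    · exact h1 r i
    · exact h0 r i
  have hkey : ∀ S : Finset (Fin m × Fin n), subDetZ (mix S) s C J hC hJ = 0 := by
    intro S
    induction S using Finset.induction_on with
    | empty =>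
      have : mix ∅ = w0 := by funext r i; simp [hmixdef]
      rw [this]; exact hF0
    | @insert p S hpS ih =>
      have hstep : mix (insert p S) = updW (mix S) p (w1 p.1 p.2) := by
        funext r i
        show (if (r, i) ∈ insert p S then w1 r i else w0 r i)
          = if r = p.1 ∧ i = p.2 then w1 p.1 p.2 else mix S r i
        by_cases hcase : r = p.1 ∧ i = p.2
        · obtain ⟨h1', h2'⟩ := hcase
          subst h1'; subst h2'
          rw [if_pos (show ((p.1 : Fin m), (p.2 : Fin n)) ∈ insert p S from
            Finset.mem_insert_self p S), if_pos ⟨rfl, rfl⟩]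
        · have hne : (r, i) ≠ p := by
            intro hcon
            exact hcase ⟨congrArg Prod.fst hcon, congrArg Prod.snd hcon⟩
          rw [if_neg hcase]
          show (if (r, i) ∈ insert p S then w1 r i else w0 r i)
            = if (r, i) ∈ S then w1 r i else w0 r i
          by_cases hS : (r, i) ∈ S
          · rw [if_pos (Finset.mem_insert_of_mem hS), if_pos hS]
          · rw [if_neg (by
              intro hcon
              rcases Finset.mem_insert.mp hcon with h | h
              exacts [hne h, hS h]), if_neg hS]
      rw [hstep]
      exact step_zero C J hC hJ d hd hsgn (hmixsig S) ih p (h1 p.1 p.2)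
  have huniv : mix Finset.univ = w1 := by funext r i; simp [hmixdef]
  have := hkey Finset.univ
  rw [huniv] at this
  exact this

end Multilinear

section Assemble
variable {n m s : ℕ} (y y' : Fin m → Fin n → ℝ) (b : Module.Basis (Fin s) ℝ (stoichSpan y y'))

/-- Sign constancy of `qdet` in `(λ, μ)` for a fixed kinetic order. -/
lemma qdet_sign_const_w (w : Fin m → Fin n → ℝ)
    (hq : ∀ lam mu, (∀ r, 0 < lam r) → (∀ j, 0 < mu j) → qdet y y' b w lam mu ≠ 0)
    {lam lam' : Fin m → ℝ} {mu mu' : Fin n → ℝ}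
    (hlam : ∀ r, 0 < lam r) (hlam' : ∀ r, 0 < lam' r)
    (hmu : ∀ j, 0 < mu j) (hmu' : ∀ j, 0 < mu' j) :
    0 < qdet y y' b w lam mu * qdet y y' b w lam' mu' := by
  set f : ℝ → ℝ := fun t => qdet y y' b w
    (fun r => (1 - t) * lam r + t * lam' r) (fun j => (1 - t) * mu j + t * mu' j) with hfdef
  have hcont : Continuous f := by
    rw [hfdef]
    unfold qdet
    apply Continuous.matrix_det
    apply Continuous.matrix_mul
    · apply Continuous.matrix_mul
      · apply Continuous.matrix_mul
        · apply Continuous.matrix_mul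
          · exact continuous_const
          · exact Continuous.matrix_diagonal (continuous_pi fun r =>
              ((continuous_const.sub continuous_id).mul continuous_const).add
                (continuous_id.mul continuous_const))
        · exact continuous_const
      · exact Continuous.matrix_diagonal (continuous_pi fun j =>
          ((continuous_const.sub continuous_id).mul continuous_const).add
            (continuous_id.mul continuous_const))
    · exact continuous_const
  have hne : ∀ t ∈ Set.Icc (0:ℝ) 1, f t ≠ 0 := fun t ht =>
    hq _ _ (fun r => convex_pos (hlam r) (hlam' r) ht.1 ht.2)
      (fun j => convex_pos (hmu j) (hmu' j) ht.1 ht.2)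
  have hf0 : f 0 = qdet y y' b w lam mu := by
    have e2 : (fun r => (1 - (0:ℝ)) * lam r + 0 * lam' r) = lam := by funext r; ring
    have e3 : (fun j => (1 - (0:ℝ)) * mu j + 0 * mu' j) = mu := by funext j; ring
    rw [hfdef]; simp only; rw [e2, e3]
  have hf1 : f 1 = qdet y y' b w lam' mu' := by
    have e2 : (fun r => (1 - (1:ℝ)) * lam r + 1 * lam' r) = lam' := by funext r; ring
    have e3 : (fun j => (1 - (1:ℝ)) * mu j + 1 * mu' j) = mu' := by funext j; ring
    rw [hfdef]; simp only; rw [e2, e3]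
  rw [← hf0, ← hf1]
  rcases lt_trichotomy (f 0) 0 with h0 | h0 | h0
  · rcases lt_trichotomy (f 1) 0 with h1 | h1 | h1
    · exact mul_pos_of_neg_of_neg h0 h1
    · exact absurd h1 (hne 1 ⟨zero_le_one, le_refl 1⟩)
    · exfalso
      obtain ⟨t, ht, hft⟩ := intermediate_value_Icc zero_le_one hcont.continuousOn
        (⟨h0.le, h1.le⟩ : (0:ℝ) ∈ Set.Icc (f 0) (f 1))
      exact hne t ht hft
  · exact absurd h0 (hne 0 ⟨le_refl 0, zero_le_one⟩)
  · rcases lt_trichotomy (f 1) 0 with h1 | h1 | h1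
    · exfalso
      obtain ⟨t, ht, hft⟩ := intermediate_value_Icc' zero_le_one hcont.continuousOn
        (⟨h1.le, h0.le⟩ : (0:ℝ) ∈ Set.Icc (f 1) (f 0))
      exact hne t ht hft
    · exact absurd h1 (hne 1 ⟨zero_le_one, le_refl 1⟩)
    · exact mul_pos h0 h1

include b in
theorem stmt8' {I : Fin m → Fin n → ℝ} (hI : IsInfluence I)
    {v : Fin m → Fin n → ℝ} (hv : InSigma I v) :
    (∀ w, InSigma I w → InjOverPL y y' w) ↔
      (InjOverPL y y' v ∧
        ∀ (C : Finset (Fin m)) (J : Finset (Fin n)) (hC : C.card = s) (hJ : J.card = s),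
          subDetA y y' s J C hJ hC ≠ 0 →
          ∀ w w', InSigma I w → InSigma I w' →
            Real.sign (subDetZ w s C J hC hJ) = Real.sign (subDetZ w' s C J hC hJ)) := by
  constructor
  · intro hall
    refine ⟨hall v hv, ?_⟩
    intro C J hC hJ hAne w w' hw hw'
    have hq : ∀ w'' lam mu, InSigma I w'' → (∀ r, 0 < lam r) → (∀ j, 0 < mu j) →
        qdet y y' b w'' lam mu ≠ 0 :=
      fun w'' lam mu hw'' hl hm => (inj_iff_qdet y y' b w'').mp (hall w'' hw'') lam mu hl hm
    set e : ℝ := qdet y y' b v (fun _ => 1) (fun _ => 1) with hedef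
    have he : e ≠ 0 := hq v _ _ hv (fun _ => one_pos) (fun _ => one_pos)
    have hkey : ∀ w'', InSigma I w'' → ∀ lam mu, (∀ r, 0 < lam r) → (∀ j, 0 < mu j) →
        0 < e * qdet y y' b w'' lam mu := by
      intro w'' hw'' lam mu hl hm
      exact qdet_sign_const y y' b hq hv hw'' (fun _ => one_pos) hl (fun _ => one_pos) hm
    have hco : ∀ w'', InSigma I w'' →
        ∀ (C0 : {C : Finset (Fin m) // C.card = s}) (J0 : {J : Finset (Fin n) // J.card = s}),
        0 ≤ e * Pco y y' w'' C0 J0 :=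
      fun w'' hw'' C0 J0 => coeff_nonneg y y' b w'' e (hkey w'' hw'') C0 J0
    set d : ℝ := e * subDetA y y' s J C hJ hC with hddef
    have hd : d ≠ 0 := mul_ne_zero he hAne
    have hsgn : ∀ w'', InSigma I w'' → 0 ≤ d * subDetZ w'' s C J hC hJ := by
      intro w'' hw''
      have h2 : 0 ≤ e * (subDetA y y' s J C hJ hC * subDetZ w'' s C J hC hJ) :=
        hco w'' hw'' ⟨C, hC⟩ ⟨J, hJ⟩
      rw [hddef, mul_assoc]
      exact h2
    by_cases hz : subDetZ w s C J hC hJ = 0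
    · have hz' : subDetZ w' s C J hC hJ = 0 :=
        zero_propagate C J hC hJ d hd hsgn hw hw' hz
      rw [hz, hz']
    · have hz' : subDetZ w' s C J hC hJ ≠ 0 :=
        fun h => hz (zero_propagate C J hC hJ d hd hsgn hw' hw h)
      have h1 : 0 < d * subDetZ w s C J hC hJ :=
        lt_of_le_of_ne (hsgn w hw) (Ne.symm (mul_ne_zero hd hz))
      have h2 : 0 < d * subDetZ w' s C J hC hJ :=
        lt_of_le_of_ne (hsgn w' hw') (Ne.symm (mul_ne_zero hd hz'))
      rcases lt_or_gt_of_ne hd with hdneg | hdpos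
      · have hZ1 : subDetZ w s C J hC hJ < 0 := by
          by_contra hcon
          push_neg at hcon
          have := mul_nonpos_of_nonpos_of_nonneg hdneg.le hcon
          linarith
        have hZ2 : subDetZ w' s C J hC hJ < 0 := by
          by_contra hcon
          push_neg at hcon
          have := mul_nonpos_of_nonpos_of_nonneg hdneg.le hcon
          linarith
        rw [Real.sign_of_neg hZ1, Real.sign_of_neg hZ2]
      · have hZ1 : 0 < subDetZ w s C J hC hJ := by
          by_contra hcon
          push_neg at hcon
          have := mul_nonpos_of_nonneg_of_nonpos hdpos.le hcon
          linarith
        have hZ2 : 0 < subDetZ w' s C J hC hJ := by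
          by_contra hcon
          push_neg at hcon
          have := mul_nonpos_of_nonneg_of_nonpos hdpos.le hcon
          linarith
        rw [Real.sign_of_pos hZ1, Real.sign_of_pos hZ2]
  · rintro ⟨hinjv, hconst⟩ w hw
    rw [inj_iff_qdet y y' b w]
    have hqv : ∀ lam mu, (∀ r, 0 < lam r) → (∀ j, 0 < mu j) →
        qdet y y' b v lam mu ≠ 0 := (inj_iff_qdet y y' b v).mp hinjv
    set e : ℝ := qdet y y' b v (fun _ => 1) (fun _ => 1) with hedef
    have he : e ≠ 0 := hqv _ _ (fun _ => one_pos) (fun _ => one_pos)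
    have hkeyv : ∀ lam mu, (∀ r, 0 < lam r) → (∀ j, 0 < mu j) →
        0 < e * qdet y y' b v lam mu := by
      intro lam mu hl hm
      exact qdet_sign_const_w y y' b v hqv (fun _ => one_pos) hl (fun _ => one_pos) hm
    have hcov : ∀ (C0 : {C : Finset (Fin m) // C.card = s})
        (J0 : {J : Finset (Fin n) // J.card = s}), 0 ≤ e * Pco y y' v C0 J0 :=
      fun C0 J0 => coeff_nonneg y y' b v e hkeyv C0 J0
    have hexv : ∃ (C0 : {C : Finset (Fin m) // C.card = s})
        (J0 : {J : Finset (Fin n) // J.card = s}), e * Pco y y' v C0 J0 ≠ 0 := by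
      by_contra hnone
      push_neg at hnone
      apply he
      have hsum : e * e = ∑ p : {C : Finset (Fin m) // C.card = s} ×
          {J : Finset (Fin n) // J.card = s},
          e * ((∏ r ∈ p.1.1, (1:ℝ)) * (∏ j ∈ p.2.1, (1:ℝ)) * Pco y y' v p.1 p.2) := by
        rw [← Finset.mul_sum]
        congr 1
        rw [hedef, qdet_expand' y y' b]
      have hzero : e * e = 0 := by
        rw [hsum]
        apply Finset.sum_eq_zero
        intro p _
        simp only [Finset.prod_const_one, one_mul]
        exact hnone p.1 p.2
      exact (mul_self_eq_zero).mp hzero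
    have hcow : ∀ (C0 : {C : Finset (Fin m) // C.card = s})
        (J0 : {J : Finset (Fin n) // J.card = s}), 0 ≤ e * Pco y y' w C0 J0 := by
      intro C0 J0
      by_cases hA : subDetA y y' s J0.1 C0.1 J0.2 C0.2 = 0
      · show 0 ≤ e * (subDetA y y' s J0.1 C0.1 J0.2 C0.2 * subDetZ w s C0.1 J0.1 C0.2 J0.2)
        rw [hA, zero_mul, mul_zero]
      · have hsign_eq := hconst C0.1 J0.1 C0.2 J0.2 hA w v hw hv
        have hv' : 0 ≤ (e * subDetA y y' s J0.1 C0.1 J0.2 C0.2)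
            * subDetZ v s C0.1 J0.1 C0.2 J0.2 := by
          have := hcov C0 J0
          show 0 ≤ _
          calc (0:ℝ) ≤ e * (subDetA y y' s J0.1 C0.1 J0.2 C0.2
              * subDetZ v s C0.1 J0.1 C0.2 J0.2) := this
            _ = (e * subDetA y y' s J0.1 C0.1 J0.2 C0.2)
              * subDetZ v s C0.1 J0.1 C0.2 J0.2 := by ring
        show 0 ≤ e * (subDetA y y' s J0.1 C0.1 J0.2 C0.2 * subDetZ w s C0.1 J0.1 C0.2 J0.2)
        rcases lt_trichotomy (subDetZ v s C0.1 J0.1 C0.2 J0.2) 0 with hzv | hzv | hzv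
        · have hzw : subDetZ w s C0.1 J0.1 C0.2 J0.2 < 0 := by
            apply rsign_eq_neg_one_iff.mp
            rw [hsign_eq, Real.sign_of_neg hzv]
          have heA : e * subDetA y y' s J0.1 C0.1 J0.2 C0.2 ≤ 0 := by
            by_contra hcon
            push_neg at hcon
            have := mul_neg_of_pos_of_neg hcon hzv
            linarith
          nlinarith [mul_nonneg (neg_nonneg.mpr heA) (neg_nonneg.mpr hzw.le)]
        · have hzw : subDetZ w s C0.1 J0.1 C0.2 J0.2 = 0 := by
            apply Real.sign_eq_zero_iff.mp
            rw [hsign_eq, hzv, Real.sign_zero]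
          rw [hzw, mul_zero, mul_zero]
        · have hzw : 0 < subDetZ w s C0.1 J0.1 C0.2 J0.2 := by
            apply rsign_eq_one_iff.mp
            rw [hsign_eq, Real.sign_of_pos hzv]
          have heA : 0 ≤ e * subDetA y y' s J0.1 C0.1 J0.2 C0.2 := by
            by_contra hcon
            push_neg at hcon
            have := mul_neg_of_neg_of_pos hcon hzv
            linarith
          nlinarith [mul_nonneg heA hzw.le]
    have hexw : ∃ (C0 : {C : Finset (Fin m) // C.card = s})
        (J0 : {J : Finset (Fin n) // J.card = s}), e * Pco y y' w C0 J0 ≠ 0 := by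
      obtain ⟨C0, J0, hne0⟩ := hexv
      refine ⟨C0, J0, ?_⟩
      have hA : subDetA y y' s J0.1 C0.1 J0.2 C0.2 ≠ 0 := by
        intro h
        apply hne0
        show e * (subDetA y y' s J0.1 C0.1 J0.2 C0.2 * subDetZ v s C0.1 J0.1 C0.2 J0.2) = 0
        rw [h, zero_mul, mul_zero]
      have hzv : subDetZ v s C0.1 J0.1 C0.2 J0.2 ≠ 0 := by
        intro h
        apply hne0
        show e * (subDetA y y' s J0.1 C0.1 J0.2 C0.2 * subDetZ v s C0.1 J0.1 C0.2 J0.2) = 0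
        rw [h, mul_zero, mul_zero]
      have hsign_eq := hconst C0.1 J0.1 C0.2 J0.2 hA w v hw hv
      have hzw : subDetZ w s C0.1 J0.1 C0.2 J0.2 ≠ 0 := by
        intro h
        apply hzv
        apply Real.sign_eq_zero_iff.mp
        rw [← hsign_eq, h, Real.sign_zero]
      show e * (subDetA y y' s J0.1 C0.1 J0.2 C0.2 * subDetZ w s C0.1 J0.1 C0.2 J0.2) ≠ 0
      exact mul_ne_zero he (mul_ne_zero hA hzw)
    intro lam mu hl hm
    have := qdet_pos_of_coeffs y y' b w e hcow hexw lam mu hl hm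
    intro hcon
    rw [hcon, mul_zero] at this
    exact lt_irrefl 0 this

end Assemble



/-- Corollary `openpos3`. -/
theorem stmt8 {n m s : ℕ}
    (y y' : Fin m → Fin n → ℝ)
    (hs : Module.finrank ℝ (stoichSpan y y') = s)
    (I : Fin m → Fin n → ℝ) (hI : IsInfluence I)
    (v : Fin m → Fin n → ℝ) (hv : InSigma I v) :
    (∀ w, InSigma I w → InjOverPL y y' w) ↔
      (InjOverPL y y' v ∧
        ∀ (C : Finset (Fin m)) (J : Finset (Fin n)) (hC : C.card = s) (hJ : J.card = s),
          subDetA y y' s J C hJ hC ≠ 0 →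
          ∀ w w', InSigma I w → InSigma I w' →
            Real.sign (subDetZ w s C J hC hJ) = Real.sign (subDetZ w' s C J hC hJ)) := by
  classical
  have hfd : FiniteDimensional ℝ (stoichSpan y y') := inferInstance
  let b : Module.Basis (Fin s) ℝ (stoichSpan y y') :=
    (Module.finBasis ℝ (stoichSpan y y')).reindex (finCongr (by rw [hs]))
  exact stmt8' y y' b hI hv
end CRN
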